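/- Let x̄_1,…,x̄_n be pairwise distinct points in ℝ^{d}. Then there exist vectors w_1,…,w_n ∈ ℝ^{d} such that the n × n matrix M with entries M_{j,t} = exp(⟨w_t, x̄_j⟩) is invertible (equivalently, has rank n). -/

import Mathlib

open scoped RealInnerProductSpace

noncomputable section

theorem exists_inner_injective
    (n d : ℕ) (xbar : Fin n → EuclideanSpace ℝ (Fin d))
    (hx : Function.Injective xbar) :
    ∃ v : EuclideanSpace ℝ (Fin d), Function.Injective fun j => ⟪v, xbar j⟫ := by
  classical
  set ι := {p : Fin n × Fin n // p.1 ≠ p.2}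
  have : Finite ι := Subtype.finite
  set K : ι → Subspace ℝ (EuclideanSpace ℝ (Fin d)) :=
    fun p => LinearMap.ker (innerSL ℝ (xbar p.1.1 - xbar p.1.2)).toLinearMap
  have hK : ∀ p, K p ≠ ⊤ := by
    intro p hp
    have hne : xbar p.1.1 - xbar p.1.2 ≠ 0 := sub_ne_zero.mpr (fun h => p.2 (hx h))
    have : (xbar p.1.1 - xbar p.1.2) ∈ K p := hp ▸ Submodule.mem_top
    simp only [K, LinearMap.mem_ker, ContinuousLinearMap.coe_coe, innerSL_apply_apply] at this
    exact hne (inner_self_eq_zero.mp this)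
  have hcover : (⋃ i, ((K i : Set (EuclideanSpace ℝ (Fin d))))) ≠ Set.univ := by
    intro h
    obtain ⟨i, hi⟩ := Subspace.exists_eq_top_of_iUnion_eq_univ h
    exact hK i hi
  obtain ⟨v, hv⟩ := Set.ne_univ_iff_exists_notMem _ |>.mp hcover
  refine ⟨v, fun j k hjk => ?_⟩
  by_contra hne
  apply hv
  refine Set.mem_iUnion.mpr ⟨⟨(j, k), hne⟩, ?_⟩
  simp only [K, SetLike.mem_coe, LinearMap.mem_ker, ContinuousLinearMap.coe_coe, innerSL_apply_apply, inner_sub_left]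
  simp only at hjk
  linarith [hjk, real_inner_comm (xbar j) v, real_inner_comm (xbar k) v]

/-- Given pairwise distinct points `x̄₁, …, x̄ₙ ∈ ℝ^d`, there exist
vectors `w₁, …, wₙ ∈ ℝ^d` such that the `n × n` matrix with entries
`M_{j,t} = exp(⟨w_t, x̄_j⟩)` is invertible. -/
theorem exp_matrix_invertible
    (n d : ℕ) (xbar : Fin n → EuclideanSpace ℝ (Fin d))
    (hx : Function.Injective xbar) :
    ∃ w : Fin n → EuclideanSpace ℝ (Fin d),
      IsUnit (Matrix.of fun j t : Fin n => Real.exp (⟪w t, xbar j⟫)) := by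
  obtain ⟨v, hv⟩ := exists_inner_injective n d xbar hx
  refine ⟨fun t => ((t : ℕ) : ℝ) • v, ?_⟩
  have hM : (Matrix.of fun j t : Fin n => Real.exp (⟪((t : ℕ) : ℝ) • v, xbar j⟫))
      = Matrix.vandermonde (fun j => Real.exp (⟪v, xbar j⟫)) := by
    ext j t
    rw [Matrix.of_apply, Matrix.vandermonde_apply, real_inner_smul_left, Real.exp_nat_mul]
  rw [hM, Matrix.isUnit_iff_isUnit_det, isUnit_iff_ne_zero, Matrix.det_vandermonde]
  refine Finset.prod_ne_zero_iff.mpr fun i _ => Finset.prod_ne_zero_iff.mpr fun j hj => ?_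
  rw [Finset.mem_Ioi] at hj
  have hij : i ≠ j := ne_of_lt hj
  exact sub_ne_zero.mpr fun h => hij (hv (Real.exp_injective h)).symm
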